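/- arXiv:1702.07930 — 4 statements merged into one kernel-verified Lean document; each statement's English description precedes it below -/
import Mathlib

section
/- The following four claims are equivalent: (a) there exists x⋄ ∈ X⋄ with 0 ∈ ∇L(x⋄) + N_C(x⋄); (b) X⋄ ∩ X₀ ≠ ∅; (c) X⋄ ⊆ X₀; (d) X₀ ∩ Q ≠ ∅ (i.e., U = 0). Here X₀ = {x ∈ C : L(x) ≤ L(χ) for all χ ∈ C} is the set of minimizers of L over C; when these equivalent conditions hold, sparse signal regularization is irrelevant. -/
open Matrix
open scoped RealInnerProductSpace ENNReal

noncomputable section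

def cnorm1 {n : ℕ} (z : Fin n → ℂ) : ℝ := ∑ j, ‖z j‖

noncomputable def cnormInf {n : ℕ} (z : Fin n → ℂ) : ℝ := ⨆ j, ‖z j‖

def psiH {p p' : ℕ} (Ψ : Matrix (Fin p) (Fin p') ℂ) (x : EuclideanSpace ℝ (Fin p)) :
    Fin p' → ℂ :=
  Matrix.mulVec Ψᴴ fun i => (x i : ℂ)

def rePsi {p p' : ℕ} (Ψ : Matrix (Fin p) (Fin p') ℂ) (w : Fin p' → ℂ) :
    EuclideanSpace ℝ (Fin p) :=
  WithLp.toLp 2 (fun i => (Matrix.mulVec Ψ w i).re)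

def Gset {n : ℕ} (s : Fin n → ℂ) : Set (Fin n → ℂ) :=
  {w | ∀ j, ‖w j‖ ≤ 1 ∧ (s j ≠ 0 → w j = s j / ((‖s j‖ : ℝ) : ℂ))}

def normalCone {p : ℕ} (C : Set (EuclideanSpace ℝ (Fin p))) (x : EuclideanSpace ℝ (Fin p)) :
    Set (EuclideanSpace ℝ (Fin p)) :=
  {a | ∀ y ∈ C, ⟪a, y - x⟫ ≤ 0}

def XuSet {p p' : ℕ} (C : Set (EuclideanSpace ℝ (Fin p))) (L : EuclideanSpace ℝ (Fin p) → ℝ)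
    (Ψ : Matrix (Fin p) (Fin p') ℂ) (u : ℝ) : Set (EuclideanSpace ℝ (Fin p)) :=
  {x ∈ C | ∀ χ ∈ C, L x + u * cnorm1 (psiH Ψ x) ≤ L χ + u * cnorm1 (psiH Ψ χ)}

def QSet {p p' : ℕ} (C : Set (EuclideanSpace ℝ (Fin p))) (Ψ : Matrix (Fin p) (Fin p') ℂ) :
    Set (EuclideanSpace ℝ (Fin p)) :=
  {x ∈ C | ∀ χ ∈ C, cnorm1 (psiH Ψ x) ≤ cnorm1 (psiH Ψ χ)}

def XdSet {p p' : ℕ} (C : Set (EuclideanSpace ℝ (Fin p))) (L : EuclideanSpace ℝ (Fin p) → ℝ)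
    (Ψ : Matrix (Fin p) (Fin p') ℂ) : Set (EuclideanSpace ℝ (Fin p)) :=
  {x ∈ QSet C Ψ | ∀ χ ∈ QSet C Ψ, L x ≤ L χ}

def Ubound {p p' : ℕ} (C : Set (EuclideanSpace ℝ (Fin p))) (L : EuclideanSpace ℝ (Fin p) → ℝ)
    (Ψ : Matrix (Fin p) (Fin p') ℂ) : ℝ≥0∞ :=
  sInf (ENNReal.ofReal '' {u : ℝ | 0 ≤ u ∧ (XuSet C L Ψ u ∩ QSet C Ψ).Nonempty})


/-- The set of minimizers of `L` over `C` (i.e. `X₀`). -/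
def X0Set {p : ℕ} (C : Set (EuclideanSpace ℝ (Fin p))) (L : EuclideanSpace ℝ (Fin p) → ℝ) :
    Set (EuclideanSpace ℝ (Fin p)) :=
  {x ∈ C | ∀ χ ∈ C, L x ≤ L χ}

open Filter Set
open scoped Topology

lemma line_hasDerivAt {p : ℕ} {L : EuclideanSpace ℝ (Fin p) → ℝ}
    {g x v : EuclideanSpace ℝ (Fin p)} (hg : HasGradientAt L g x) :
    HasDerivAt (fun t : ℝ => L (x + t • v)) ⟪g, v⟫ 0 := by
  have hc : HasDerivAt (fun t : ℝ => x + t • v) v 0 := by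
    simpa using ((hasDerivAt_id (0 : ℝ)).smul_const v).const_add x
  have hF := hg.hasFDerivAt
  have hx0 : x = x + (0 : ℝ) • v := by simp
  rw [hx0] at hF
  have h := hF.comp_hasDerivAt (0 : ℝ) hc
  exact h

lemma slope_tendsto {p : ℕ} {L : EuclideanSpace ℝ (Fin p) → ℝ}
    {g x v : EuclideanSpace ℝ (Fin p)} (hg : HasGradientAt L g x) :
    Tendsto (fun t : ℝ => (L (x + t • v) - L x) / t) (𝓝[>] 0) (𝓝 ⟪g, v⟫) := by
  have h := hasDerivAt_iff_tendsto_slope.mp (line_hasDerivAt (v := v) hg)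
  have h2 : Tendsto (slope (fun t : ℝ => L (x + t • v)) 0) (𝓝[>] 0) (𝓝 ⟪g, v⟫) :=
    h.mono_left (nhdsWithin_mono _ (fun t ht => ne_of_gt ht))
  refine h2.congr' ?_
  filter_upwards [self_mem_nhdsWithin] with t ht
  simp [slope_def_field, div_eq_inv_mul]

/-- If `x` minimizes `L` over convex `C`, then the gradient inequality direction holds. -/
lemma grad_nonneg_of_min {p : ℕ} {C : Set (EuclideanSpace ℝ (Fin p))} (hCcv : Convex ℝ C)
    {L : EuclideanSpace ℝ (Fin p) → ℝ} {g x : EuclideanSpace ℝ (Fin p)}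
    (hg : HasGradientAt L g x) (hx : x ∈ C) (hmin : ∀ χ ∈ C, L x ≤ L χ)
    {y : EuclideanSpace ℝ (Fin p)} (hy : y ∈ C) : 0 ≤ ⟪g, y - x⟫ := by
  refine ge_of_tendsto (slope_tendsto (v := y - x) hg) ?_
  filter_upwards [Ioc_mem_nhdsGT one_pos] with t ht
  have hmem : x + t • (y - x) ∈ C := by
    have : x + t • (y - x) = (1 - t) • x + t • y := by module
    rw [this]
    exact hCcv hx hy (by linarith [ht.2]) (le_of_lt ht.1) (by ring)
  exact div_nonneg (by linarith [hmin _ hmem]) ht.1.le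

/-- Gradient inequality for convex differentiable functions. -/
lemma grad_ineq {p : ℕ} {L : EuclideanSpace ℝ (Fin p) → ℝ} (hLcv : ConvexOn ℝ Set.univ L)
    {g x : EuclideanSpace ℝ (Fin p)} (hg : HasGradientAt L g x)
    (y : EuclideanSpace ℝ (Fin p)) : L x + ⟪g, y - x⟫ ≤ L y := by
  have h : ⟪g, y - x⟫ ≤ L y - L x := by
    refine le_of_tendsto (slope_tendsto (v := y - x) hg) ?_
    filter_upwards [Ioc_mem_nhdsGT one_pos] with t ht
    have hconv : L (x + t • (y - x)) ≤ (1 - t) * L x + t * L y := by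
      have : x + t • (y - x) = (1 - t) • x + t • y := by module
      rw [this]
      exact hLcv.2 (Set.mem_univ x) (Set.mem_univ y) (by linarith [ht.2]) ht.1.le (by ring)
    rw [div_le_iff₀ ht.1]
    nlinarith
  linarith

theorem statement_2 {p p' : ℕ} (hp : 0 < p) (hp' : 0 < p')
    (C : Set (EuclideanSpace ℝ (Fin p))) (hCne : C.Nonempty) (hCcl : IsClosed C)
    (hCcv : Convex ℝ C)
    (L : EuclideanSpace ℝ (Fin p) → ℝ) (hLcv : ConvexOn ℝ Set.univ L)
    (gradL : EuclideanSpace ℝ (Fin p) → EuclideanSpace ℝ (Fin p))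
    (hLd : ∀ x, HasGradientAt L (gradL x) x)
    (hLb : BddBelow (L '' C))
    (Ψ : Matrix (Fin p) (Fin p') ℂ) (hXd : (XdSet C L Ψ).Nonempty) :
    [ (∃ x ∈ XdSet C L Ψ, ∃ a ∈ normalCone C x, gradL x + a = 0),
      (XdSet C L Ψ ∩ X0Set C L).Nonempty,
      XdSet C L Ψ ⊆ X0Set C L,
      (X0Set C L ∩ QSet C Ψ).Nonempty ].TFAE := by
  tfae_have 1 → 2 := by
    rintro ⟨x, hxd, a, ha, heq⟩
    have hax : a = -gradL x := eq_neg_of_add_eq_zero_right heq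
    refine ⟨x, hxd, hxd.1.1, fun χ hχ => ?_⟩
    have h1 := grad_ineq hLcv (hLd x) χ
    have h2 : ⟪a, χ - x⟫ ≤ 0 := ha χ hχ
    rw [hax, inner_neg_left] at h2
    linarith
  tfae_have 2 → 3 := by
    rintro ⟨x, hxd, hx0⟩ y hyd
    exact ⟨hyd.1.1, fun χ hχ => le_trans (hyd.2 x hxd.1) (hx0.2 χ hχ)⟩
  tfae_have 3 → 4 := by
    intro h3
    obtain ⟨x, hx⟩ := hXd
    exact ⟨x, h3 hx, hx.1⟩
  tfae_have 4 → 2 := by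
    rintro ⟨x, hx0, hxQ⟩
    exact ⟨x, ⟨hxQ, fun χ hχ => hx0.2 χ hχ.1⟩, hx0⟩
  tfae_have 2 → 1 := by
    rintro ⟨x, hxd, hx0⟩
    refine ⟨x, hxd, -(gradL x), fun y hy => ?_, by simp⟩
    rw [inner_neg_left, neg_nonpos]
    exact grad_nonneg_of_min hCcv (hLd x) hx0.1 hx0.2 hy
  tfae_finish
end
end

section
/- (Theorem 1) Assume there exists x̄ ∈ C with Ψ^H x̄ = 0 and that X⋄ ≠ ∅. Let d ≥ 1 be the dimension of the real subspace Re(R(Ψ)) = {Re(Ψ w) : w ∈ ℂ^{p'}}, and let Ψ = F Z where F is a real p × d matrix of rank d and Z is a complex d × p' matrix whose real d × 2p' matrix [Re Z Im Z] has rank d. Define F⁺ = (Fᵀ F)⁻¹ Fᵀ and Z^‡ = Z^H (Re(Z Z^H))⁻¹ (Re(Z Z^H) is invertible). For x⋄ ∈ X⋄ define U₀(x⋄) = inf { ‖t + Z^‡ (F⁺(∇L(x⋄) + a) − Re(Z t))‖_∞ : t ∈ ℂ^{p'}, a ∈ N_C(x⋄), ∇L(x⋄) + a ∈ column space of F }, with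 inf over the empty set equal to +∞. Then U₀(x⋄) = U for every x⋄ ∈ X⋄; in particular U₀(x⋄) does not depend on the choice of x⋄ ∈ X⋄, and U = +∞ exactly when the constraint set is empty. -/
open Matrix
open scoped RealInnerProductSpace ENNReal

noncomputable section

/-- `F⁺ = (Fᵀ F)⁻¹ Fᵀ`, the Moore–Penrose inverse of a full-column-rank real matrix. -/
def Fpinv {p d : ℕ} (F : Matrix (Fin p) (Fin d) ℝ) : Matrix (Fin d) (Fin p) ℝ :=
  (Fᵀ * F)⁻¹ * Fᵀ

/-- `Z^‡ = Zᴴ (Re (Z Zᴴ))⁻¹`. -/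
def Zddag {d p' : ℕ} (Z : Matrix (Fin d) (Fin p') ℂ) : Matrix (Fin p') (Fin d) ℂ :=
  Zᴴ * (((Z * Zᴴ).map Complex.re)⁻¹.map Complex.ofReal)

/-- `p(x,a,t) = t + Z^‡ (F⁺(∇L(x)+a) − Re(Z t))`, with `g = ∇L(x)`. -/
def pvec {p p' d : ℕ} (F : Matrix (Fin p) (Fin d) ℝ) (Z : Matrix (Fin d) (Fin p') ℂ)
    (g a : EuclideanSpace ℝ (Fin p)) (t : Fin p' → ℂ) : Fin p' → ℂ :=
  t + (Zddag Z).mulVec fun i =>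
    (((Fpinv F).mulVec (fun j => g j + a j) i - (Z.mulVec t i).re : ℝ) : ℂ)

/- ======================= Auxiliary lemmas ======================= -/

open scoped Topology

namespace Statement11Aux

variable {p p' : ℕ}

lemma psiH_apply (Ψ : Matrix (Fin p) (Fin p') ℂ) (x : EuclideanSpace ℝ (Fin p)) (j : Fin p') :
    psiH Ψ x j = ∑ i, (starRingEnd ℂ) (Ψ i j) * (x i : ℂ) := by
  simp [psiH, Matrix.mulVec, dotProduct, Matrix.conjTranspose_apply]

lemma cnorm1_nonneg {n : ℕ} (z : Fin n → ℂ) : 0 ≤ cnorm1 z :=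
  Finset.sum_nonneg fun _ _ => norm_nonneg _

lemma cnorm1_eq_zero {n : ℕ} {z : Fin n → ℂ} (h : cnorm1 z = 0) : z = 0 := by
  funext j
  have := (Finset.sum_eq_zero_iff_of_nonneg
    (fun i _ => norm_nonneg (z i))).mp h j (Finset.mem_univ j)
  simpa using this

lemma cnorm1_smul {n : ℕ} (s : ℝ) (z : Fin n → ℂ) :
    cnorm1 (fun j => (s : ℂ) * z j) = |s| * cnorm1 z := by
  simp [cnorm1, norm_mul, Complex.norm_real, Finset.mul_sum]

lemma abs_le_cnormInf {n : ℕ} (z : Fin n → ℂ) (j : Fin n) :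
    ‖z j‖ ≤ cnormInf z :=
  le_ciSup (f := fun j => ‖z j‖) (Set.Finite.bddAbove (Set.finite_range _)) j

lemma cnormInf_nonneg {n : ℕ} [Nonempty (Fin n)] (z : Fin n → ℂ) : 0 ≤ cnormInf z :=
  le_trans (norm_nonneg _) (abs_le_cnormInf z (Classical.arbitrary _))

lemma cnormInf_le {n : ℕ} [Nonempty (Fin n)] {z : Fin n → ℂ} {c : ℝ}
    (h : ∀ j, ‖z j‖ ≤ c) : cnormInf z ≤ c := ciSup_le h

lemma psiH_add_smul (Ψ : Matrix (Fin p) (Fin p') ℂ) (x v : EuclideanSpace ℝ (Fin p)) (s : ℝ)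
    (j : Fin p') : psiH Ψ (x + s • v) j = psiH Ψ x j + (s : ℂ) * psiH Ψ v j := by
  simp only [psiH_apply]
  have h : ∀ i, (((x + s • v) i : ℝ) : ℂ) = (x i : ℂ) + (s : ℂ) * (v i : ℂ) := by
    intro i
    have : (x + s • v) i = x i + s * v i := by simp
    rw [this]; push_cast; ring
  simp only [h, mul_add, Finset.sum_add_distrib, Finset.mul_sum]
  congr 1
  exact Finset.sum_congr rfl fun i _ => by ring

lemma psiH_smul (Ψ : Matrix (Fin p) (Fin p') ℂ) (v : EuclideanSpace ℝ (Fin p)) (s : ℝ)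
    (j : Fin p') : psiH Ψ (s • v) j = (s : ℂ) * psiH Ψ v j := by
  have h0 : psiH Ψ (0 : EuclideanSpace ℝ (Fin p)) j = 0 := by
    simp [psiH, Matrix.mulVec, dotProduct]
  have := psiH_add_smul Ψ 0 v s j
  rw [zero_add] at this
  rw [this, h0, zero_add]

lemma psiH_sub (Ψ : Matrix (Fin p) (Fin p') ℂ) (χ x : EuclideanSpace ℝ (Fin p)) (j : Fin p') :
    psiH Ψ (χ - x) j = psiH Ψ χ j - psiH Ψ x j := by
  have h := psiH_add_smul Ψ χ x (-1) j
  have h2 : χ + (-1 : ℝ) • x = χ - x := by module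
  rw [h2] at h
  rw [h]
  push_cast
  ring

lemma inner_rePsi_eq (Ψ : Matrix (Fin p) (Fin p') ℂ) (w : Fin p' → ℂ)
    (v : EuclideanSpace ℝ (Fin p)) :
    ⟪rePsi Ψ w, v⟫ = ∑ j, (w j * (starRingEnd ℂ) (psiH Ψ v j)).re := by
  have h1 : ⟪rePsi Ψ w, v⟫ = ∑ i, ∑ j, (Ψ i j * w j).re * v i := by
    have : ⟪rePsi Ψ w, v⟫ = ∑ i, (Matrix.mulVec Ψ w i).re * v i := by
      simp [PiLp.inner_apply, RCLike.inner_apply, rePsi, mul_comm]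
    rw [this]
    refine Finset.sum_congr rfl fun i _ => ?_
    rw [Matrix.mulVec, dotProduct, Complex.re_sum, Finset.sum_mul]
  have h2 : ∀ j, (w j * (starRingEnd ℂ) (psiH Ψ v j)).re = ∑ i, (Ψ i j * w j).re * v i := by
    intro j
    rw [psiH_apply, map_sum]
    have : ∀ i ∈ Finset.univ, (starRingEnd ℂ) ((starRingEnd ℂ) (Ψ i j) * (v i : ℂ))
        = (v i : ℂ) * (Ψ i j) := by
      intro i _
      simp [_root_.map_mul, Complex.conj_conj, Complex.conj_ofReal]; ring
    rw [Finset.sum_congr rfl this, Finset.mul_sum, Complex.re_sum]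
    refine Finset.sum_congr rfl fun i _ => ?_
    have : w j * ((v i : ℂ) * Ψ i j) = (v i : ℂ) * (Ψ i j * w j) := by ring
    rw [this, Complex.re_ofReal_mul]; ring
  rw [h1, Finset.sum_comm]
  exact (Finset.sum_congr rfl fun j _ => (h2 j).symm)

lemma abs_inner_rePsi_le (Ψ : Matrix (Fin p) (Fin p') ℂ) {w : Fin p' → ℂ} {c : ℝ}
    (hw : ∀ j, ‖w j‖ ≤ c) (v : EuclideanSpace ℝ (Fin p)) :
    |⟪rePsi Ψ w, v⟫| ≤ c * cnorm1 (psiH Ψ v) := by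
  rw [inner_rePsi_eq, cnorm1, Finset.mul_sum]
  refine le_trans (Finset.abs_sum_le_sum_abs _ _) (Finset.sum_le_sum fun j _ => ?_)
  refine le_trans (Complex.abs_re_le_norm _) ?_
  rw [norm_mul, Complex.norm_conj]
  exact mul_le_mul_of_nonneg_right (hw j) (norm_nonneg _)

lemma exists_w_attain (Ψ : Matrix (Fin p) (Fin p') ℂ) (v : EuclideanSpace ℝ (Fin p)) :
    ∃ w : Fin p' → ℂ, (∀ j, ‖w j‖ ≤ 1) ∧
      ⟪rePsi Ψ w, v⟫ = cnorm1 (psiH Ψ v) := by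
  refine ⟨fun j => if psiH Ψ v j = 0 then 0 else psiH Ψ v j / ((‖psiH Ψ v j‖ : ℝ) : ℂ),
    ?_, ?_⟩
  · intro j
    by_cases h : psiH Ψ v j = 0
    · simp [h]
    · simp only [h, if_false]
      rw [norm_div, Complex.norm_real, Real.norm_eq_abs, abs_of_nonneg (norm_nonneg _),
        div_self (by simpa using h)]
  · rw [inner_rePsi_eq, cnorm1]
    refine Finset.sum_congr rfl fun j _ => ?_
    by_cases h : psiH Ψ v j = 0
    · simp [h]
    · simp only [h, if_false]
      have habs : ((‖psiH Ψ v j‖ : ℝ) : ℂ) ≠ 0 := by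
        simpa using h
      have : psiH Ψ v j / ((‖psiH Ψ v j‖ : ℝ) : ℂ) * (starRingEnd ℂ) (psiH Ψ v j)
          = ((‖psiH Ψ v j‖ : ℝ) : ℂ) := by
        rw [div_mul_eq_mul_div, Complex.mul_conj, Complex.normSq_eq_norm_sq]
        push_cast
        rw [pow_two, mul_div_assoc, div_self habs, mul_one]
      rw [this, Complex.ofReal_re]

/-- `rePsi` as a real-linear map. -/
def rePsiL (Ψ : Matrix (Fin p) (Fin p') ℂ) : (Fin p' → ℂ) →ₗ[ℝ] EuclideanSpace ℝ (Fin p) where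
  toFun := rePsi Ψ
  map_add' w w' := by
    ext i
    have : (rePsi Ψ w + rePsi Ψ w') i = rePsi Ψ w i + rePsi Ψ w' i := by simp
    rw [this]
    simp [rePsi, Matrix.mulVec_add]
  map_smul' r w := by
    ext i
    have h2 : (r • rePsi Ψ w) i = r * rePsi Ψ w i := by simp
    simp only [RingHom.id_apply]
    rw [h2]
    have : Matrix.mulVec Ψ (r • w) = r • Matrix.mulVec Ψ w := Matrix.mulVec_smul Ψ r w
    simp only [rePsi, this, Pi.smul_apply, Complex.real_smul, Complex.re_ofReal_mul]

lemma rePsiL_apply (Ψ : Matrix (Fin p) (Fin p') ℂ) (w : Fin p' → ℂ) :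
    rePsiL Ψ w = rePsi Ψ w := rfl

lemma continuous_psiH_j (Ψ : Matrix (Fin p) (Fin p') ℂ) (j : Fin p') :
    Continuous fun v : EuclideanSpace ℝ (Fin p) => psiH Ψ v j := by
  have : (fun v : EuclideanSpace ℝ (Fin p) => psiH Ψ v j)
      = fun v => ∑ i, (starRingEnd ℂ) (Ψ i j) * (v i : ℂ) := by
    funext v; simp [psiH, Matrix.mulVec, dotProduct, Matrix.conjTranspose_apply]
  rw [this]
  exact continuous_finset_sum _ fun i _ =>
    continuous_const.mul (Complex.continuous_ofReal.comp (PiLp.continuous_apply 2 _ i))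

lemma continuous_cnorm1_psiH (Ψ : Matrix (Fin p) (Fin p') ℂ) :
    Continuous fun v : EuclideanSpace ℝ (Fin p) => cnorm1 (psiH Ψ v) := by
  unfold cnorm1
  exact continuous_finset_sum _ fun j _ =>
    continuous_norm.comp (continuous_psiH_j Ψ j)

section NC
variable {C : Set (EuclideanSpace ℝ (Fin p))} {x : EuclideanSpace ℝ (Fin p)}

lemma normalCone_closed : IsClosed (normalCone C x) := by
  have : normalCone C x = ⋂ y ∈ C, {a : EuclideanSpace ℝ (Fin p) | ⟪a, y - x⟫ ≤ (0:ℝ)} := by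
    ext a; simp [normalCone]
  rw [this]
  exact isClosed_biInter fun y _ =>
    isClosed_le (continuous_id.inner continuous_const) continuous_const

lemma normalCone_convex : Convex ℝ (normalCone C x) := by
  intro a ha b hb θ σ hθ hσ hθσ
  intro y hy
  have h1 := ha y hy
  have h2 := hb y hy
  rw [inner_add_left, real_inner_smul_left, real_inner_smul_left]
  nlinarith

lemma zero_mem_normalCone : (0 : EuclideanSpace ℝ (Fin p)) ∈ normalCone C x := by
  intro y _; rw [inner_zero_left]

lemma smul_mem_normalCone {c : ℝ} (hc : 0 ≤ c) {n : EuclideanSpace ℝ (Fin p)}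
    (hn : n ∈ normalCone C x) : c • n ∈ normalCone C x := by
  intro y hy
  rw [real_inner_smul_left]
  exact mul_nonpos_of_nonneg_of_nonpos hc (hn y hy)

end NC

lemma slope_tendsto {L : EuclideanSpace ℝ (Fin p) → ℝ} {g x : EuclideanSpace ℝ (Fin p)}
    (hL : HasGradientAt L g x) (v : EuclideanSpace ℝ (Fin p)) :
    Filter.Tendsto (fun s : ℝ => (L (x + s • v) - L x) / s) (𝓝[>] (0:ℝ)) (𝓝 ⟪g, v⟫) := by
  have hc : HasDerivAt (fun s : ℝ => x + s • v) v 0 := by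
    simpa using ((hasDerivAt_id (0:ℝ)).smul_const v).const_add x
  have hL' : HasFDerivAt L ((InnerProductSpace.toDual ℝ _) g) (x + (0:ℝ) • v) := by
    simpa using hL.hasFDerivAt
  have hd : HasDerivAt (fun s : ℝ => L (x + s • v)) ⟪g, v⟫ 0 := by
    have := hL'.comp_hasDerivAt 0 hc
    simpa [InnerProductSpace.toDual_apply_apply, Function.comp_def] using this
  have h3 : Filter.Tendsto (slope (fun s : ℝ => L (x + s • v)) 0) (𝓝[>] (0:ℝ)) (𝓝 ⟪g, v⟫) :=
    (hasDerivAt_iff_tendsto_slope.mp hd).mono_left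
      (nhdsWithin_mono _ (fun s hs => ne_of_gt hs))
  refine h3.congr' ?_
  filter_upwards [self_mem_nhdsWithin] with s hs
  rw [slope_def_field]
  simp [div_eq_inv_mul]

lemma grad_ineq {L : EuclideanSpace ℝ (Fin p) → ℝ} (hLcv : ConvexOn ℝ Set.univ L)
    {g x : EuclideanSpace ℝ (Fin p)} (hL : HasGradientAt L g x) (y : EuclideanSpace ℝ (Fin p)) :
    L x + ⟪g, y - x⟫ ≤ L y := by
  have key : ∀ s : ℝ, s ∈ Set.Ioc (0:ℝ) 1 → (L (x + s • (y - x)) - L x) / s ≤ L y - L x := by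
    intro s hs
    obtain ⟨hs1, hs2⟩ := Set.mem_Ioc.mp hs
    have hxy : x + s • (y - x) = (1 - s) • x + s • y := by module
    have hcv := hLcv.2 (Set.mem_univ x) (Set.mem_univ y)
      (by linarith : (0:ℝ) ≤ 1 - s) (le_of_lt hs1) (by ring)
    rw [div_le_iff₀ hs1, hxy]
    simp only [smul_eq_mul] at hcv
    nlinarith [hcv]
  have hle : ⟪g, y - x⟫ ≤ L y - L x := by
    refine le_of_tendsto (slope_tendsto hL (y - x)) ?_
    filter_upwards [Ioc_mem_nhdsGT_of_mem (Set.mem_Ico.mpr ⟨le_refl _, zero_lt_one⟩)] with s hs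
    exact key s hs
  linarith

lemma step1 {C : Set (EuclideanSpace ℝ (Fin p))} (hCcv : Convex ℝ C)
    {L : EuclideanSpace ℝ (Fin p) → ℝ} {Ψ : Matrix (Fin p) (Fin p') ℂ} {u : ℝ}
    {g x : EuclideanSpace ℝ (Fin p)} (hL : HasGradientAt L g x)
    (hx : x ∈ C) (hx0 : psiH Ψ x = 0) (hu : 0 ≤ u)
    (hXu : ∀ χ ∈ C, L x + u * cnorm1 (psiH Ψ x) ≤ L χ + u * cnorm1 (psiH Ψ χ))
    {y : EuclideanSpace ℝ (Fin p)} (hy : y ∈ C) :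
    0 ≤ ⟪g, y - x⟫ + u * cnorm1 (psiH Ψ (y - x)) := by
  have key : ∀ s : ℝ, s ∈ Set.Ioc (0:ℝ) 1 →
      -(u * cnorm1 (psiH Ψ (y - x))) ≤ (L (x + s • (y - x)) - L x) / s := by
    intro s hs
    obtain ⟨hs1, hs2⟩ := Set.mem_Ioc.mp hs
    have hxy : x + s • (y - x) = (1 - s) • x + s • y := by module
    have hχ : x + s • (y - x) ∈ C := by
      rw [hxy]
      exact hCcv hx hy (by linarith) (le_of_lt hs1) (by ring)
    have hps : cnorm1 (psiH Ψ (x + s • (y - x))) = s * cnorm1 (psiH Ψ (y - x)) := by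
      have : psiH Ψ (x + s • (y - x)) = fun j => (s : ℂ) * psiH Ψ (y - x) j := by
        funext j; rw [psiH_add_smul, hx0]; simp
      rw [this, cnorm1_smul, abs_of_nonneg (le_of_lt hs1)]
    have h0 := hXu _ hχ
    have hz : cnorm1 (psiH Ψ x) = 0 := by rw [hx0]; simp [cnorm1]
    rw [hz, hps] at h0
    rw [le_div_iff₀ hs1]
    nlinarith [h0]
  refine le_of_add_le_add_right (a := -(u * cnorm1 (psiH Ψ (y - x)))) ?_
  rw [zero_add]
  have hle : -(u * cnorm1 (psiH Ψ (y - x))) ≤ ⟪g, y - x⟫ := by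
    refine ge_of_tendsto (slope_tendsto hL (y - x)) ?_
    filter_upwards [Ioc_mem_nhdsGT_of_mem (Set.mem_Ico.mpr ⟨le_refl _, zero_lt_one⟩)] with s hs
    exact key s hs
  linarith

lemma sufficiency {C : Set (EuclideanSpace ℝ (Fin p))} {L : EuclideanSpace ℝ (Fin p) → ℝ}
    {Ψ : Matrix (Fin p) (Fin p') ℂ} {u : ℝ} {g x : EuclideanSpace ℝ (Fin p)}
    (hLcv : ConvexOn ℝ Set.univ L) (hL : HasGradientAt L g x)
    (hx0 : psiH Ψ x = 0) (hu : 0 ≤ u) {t : Fin p' → ℂ} {a : EuclideanSpace ℝ (Fin p)}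
    (ha : a ∈ normalCone C x) (ht : rePsi Ψ t = fun i => g i + a i)
    (htu : ∀ j, ‖t j‖ ≤ u) :
    ∀ χ ∈ C, L x + u * cnorm1 (psiH Ψ x) ≤ L χ + u * cnorm1 (psiH Ψ χ) := by
  intro χ hχ
  have hzx : cnorm1 (psiH Ψ x) = 0 := by rw [hx0]; simp [cnorm1]
  have hgrad := grad_ineq hLcv hL χ
  have hbnd := abs_inner_rePsi_le Ψ htu (χ - x)
  have hps : cnorm1 (psiH Ψ (χ - x)) = cnorm1 (psiH Ψ χ) := by
    have : psiH Ψ (χ - x) = psiH Ψ χ := by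
      funext j; rw [psiH_sub, hx0]; simp
    rw [this]
  rw [hps] at hbnd
  have hinner : ⟪g, χ - x⟫ = ⟪rePsi Ψ t, χ - x⟫ - ⟪a, χ - x⟫ := by
    have hg : g = rePsi Ψ t - a := by
      ext i
      have h1 := congrFun ht i
      have h2 : (rePsi Ψ t - a) i = rePsi Ψ t i - a i := by simp
      rw [h2, h1]; ring
    rw [hg, inner_sub_left]
  have hna := ha χ hχ
  have habs := abs_le.mp hbnd
  rw [hzx, mul_zero, add_zero]
  have h0 : 0 ≤ cnorm1 (psiH Ψ χ) := cnorm1_nonneg _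
  have := habs.1
  rw [hinner] at hgrad
  linarith

lemma necessity {C : Set (EuclideanSpace ℝ (Fin p))} (hCcv : Convex ℝ C)
    {L : EuclideanSpace ℝ (Fin p) → ℝ} {Ψ : Matrix (Fin p) (Fin p') ℂ} {u : ℝ}
    {g x : EuclideanSpace ℝ (Fin p)} (hL : HasGradientAt L g x)
    (hx : x ∈ C) (hx0 : psiH Ψ x = 0) (hu : 0 ≤ u)
    (hXu : ∀ χ ∈ C, L x + u * cnorm1 (psiH Ψ x) ≤ L χ + u * cnorm1 (psiH Ψ χ)) :
    ∃ t : Fin p' → ℂ, ∃ a ∈ normalCone C x,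
      rePsi Ψ t = (fun i => g i + a i) ∧ ∀ j, ‖t j‖ ≤ u := by
  classical
  set N := normalCone C x with hN
  suffices h : ∃ w : Fin p' → ℂ, (∀ j, ‖w j‖ ≤ 1) ∧ (-g - u • rePsi Ψ w) ∈ N by
    obtain ⟨w, hw1, hw2⟩ := h
    refine ⟨fun j => ((-u : ℝ) : ℂ) * w j, -g - u • rePsi Ψ w, hw2, ?_, ?_⟩
    · funext i
      have h1 : rePsi Ψ (fun j => ((-u : ℝ) : ℂ) * w j) i = -u * rePsi Ψ w i := by
        have : (fun j => ((-u : ℝ) : ℂ) * w j) = (-u : ℝ) • w := by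
          funext j; simp [Complex.real_smul]
        rw [this, ← rePsiL_apply, _root_.map_smul, rePsiL_apply]
        simp
      rw [h1]
      have h2 : (-g - u • rePsi Ψ w) i = -(g i) - u * rePsi Ψ w i := by simp
      rw [h2]; ring
    · intro j
      rw [norm_mul]
      have : ‖((-u : ℝ) : ℂ)‖ = u := by
        rw [Complex.norm_real, Real.norm_eq_abs, abs_neg, abs_of_nonneg hu]
      rw [this]
      calc u * ‖w j‖ ≤ u * 1 := by
            exact mul_le_mul_of_nonneg_left (hw1 j) hu
        _ = u := mul_one u
  by_contra hcon
  push_neg at hcon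
  set W : Set (Fin p' → ℂ) := {w | ∀ j, ‖w j‖ ≤ 1} with hW
  set K : Set (EuclideanSpace ℝ (Fin p)) := (fun w => -g - u • rePsi Ψ w) '' W with hK
  have hdisj : Disjoint K N := by
    rw [Set.disjoint_left]
    rintro k ⟨w, hwW, rfl⟩ hkN
    exact hcon w hwW hkN
  have hWeq : W = Set.pi Set.univ (fun _ : Fin p' => Metric.closedBall (0:ℂ) 1) := by
    ext w
    simp [hW, Set.mem_pi, Metric.mem_closedBall, Complex.dist_eq]
  have hWc : IsCompact W := by
    rw [hWeq]; exact isCompact_univ_pi fun _ => isCompact_closedBall _ _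
  have hWv : Convex ℝ W := by
    rw [hWeq]; exact convex_pi fun _ _ => convex_closedBall _ _
  have hmc : Continuous fun w : Fin p' → ℂ => -g - u • rePsi Ψ w := by
    have hlc : Continuous fun w : Fin p' → ℂ => rePsi Ψ w := by
      have := (rePsiL (p := p) (p' := p') Ψ).continuous_of_finiteDimensional
      refine this.congr fun w => (rePsiL_apply Ψ w)
    exact continuous_const.sub (hlc.const_smul u)
  have hKc : IsCompact K := hWc.image hmc
  have hKv : Convex ℝ K := by
    have hlin : K = (fun e => -g + e) '' ((-(u • rePsiL Ψ)) '' W) := by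
      rw [Set.image_image]
      refine Set.image_congr fun w _ => ?_
      simp [rePsiL_apply, sub_eq_add_neg]
    rw [hlin]
    exact (hWv.linear_image _).translate _
  obtain ⟨f, α, β, hfK, hαβ, hfN⟩ :=
    geometric_hahn_banach_compact_closed hKv hKc normalCone_convex normalCone_closed hdisj
  have hβ0 : β < 0 := by
    have := hfN 0 zero_mem_normalCone
    simpa using this
  have hfN0 : ∀ n ∈ N, (0:ℝ) ≤ f n := by
    intro n hn
    by_contra hlt
    push_neg at hlt
    have hc : 0 < (β - 1) / f n := div_pos_of_neg_of_neg (by linarith) hlt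
    have h2 := hfN _ (smul_mem_normalCone (le_of_lt hc) hn)
    rw [_root_.map_smul, smul_eq_mul, div_mul_cancel₀ _ (ne_of_lt hlt)] at h2
    linarith
  set z := (InnerProductSpace.toDual ℝ (EuclideanSpace ℝ (Fin p))).symm f with hzdef
  have hz : ∀ y, ⟪z, y⟫ = f y := fun y => InnerProductSpace.toDual_symm_apply
  set S₀ : Set (EuclideanSpace ℝ (Fin p)) :=
    {v | ∃ l : ℝ, 0 ≤ l ∧ ∃ y ∈ C, v = l • (y - x)} with hS₀
  set T := closure S₀ with hT
  have h0S : (0 : EuclideanSpace ℝ (Fin p)) ∈ S₀ := ⟨0, le_refl 0, x, hx, by simp⟩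
  have hS₀smul : ∀ c : ℝ, 0 ≤ c → ∀ v ∈ S₀, c • v ∈ S₀ := by
    rintro c hc v ⟨l, hl, y, hy, rfl⟩
    exact ⟨c * l, mul_nonneg hc hl, y, hy, smul_smul c l _⟩
  have hS₀cv : Convex ℝ S₀ := by
    rintro v₁ ⟨l₁, hl₁, y₁, hy₁, rfl⟩ v₂ ⟨l₂, hl₂, y₂, hy₂, rfl⟩ θ σ hθ hσ hθσ
    rcases eq_or_lt_of_le (add_nonneg (mul_nonneg hθ hl₁) (mul_nonneg hσ hl₂)) with hν | hν
    · have h1 : θ * l₁ = 0 := by nlinarith [mul_nonneg hθ hl₁, mul_nonneg hσ hl₂]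
      have h2 : σ * l₂ = 0 := by nlinarith [mul_nonneg hθ hl₁, mul_nonneg hσ hl₂]
      refine ⟨0, le_refl 0, x, hx, ?_⟩
      rw [smul_smul, smul_smul, h1, h2]
      simp
    · set ν := θ * l₁ + σ * l₂ with hνdef
      refine ⟨ν, le_of_lt hν, (θ * l₁ / ν) • y₁ + (σ * l₂ / ν) • y₂, ?_, ?_⟩
      · exact hCcv hy₁ hy₂ (div_nonneg (mul_nonneg hθ hl₁) (le_of_lt hν))
          (div_nonneg (mul_nonneg hσ hl₂) (le_of_lt hν))
          (by field_simp; exact hνdef.symm)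
      · have hν' : ν ≠ 0 := ne_of_gt hν
        rw [smul_smul, smul_smul]
        have : ν • ((θ * l₁ / ν) • y₁ + (σ * l₂ / ν) • y₂ - x)
            = (θ * l₁) • y₁ + (σ * l₂) • y₂ - ν • x := by
          rw [smul_sub, smul_add, smul_smul, smul_smul]
          rw [mul_div_cancel₀ _ hν', mul_div_cancel₀ _ hν']
        rw [this, hνdef]
        module
  have hTsmul : ∀ c : ℝ, 0 ≤ c → ∀ v ∈ T, c • v ∈ T := by
    intro c hc v hv
    have h1 : c • v ∈ (fun e : EuclideanSpace ℝ (Fin p) => c • e) '' closure S₀ :=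
      Set.mem_image_of_mem _ hv
    have h2 := image_closure_subset_closure_image
      (f := fun e : EuclideanSpace ℝ (Fin p) => c • e) (s := S₀) (continuous_const_smul c)
    have h3 : (fun e : EuclideanSpace ℝ (Fin p) => c • e) '' S₀ ⊆ S₀ := by
      rintro _ ⟨v', hv', rfl⟩; exact hS₀smul c hc v' hv'
    exact closure_mono h3 (h2 h1)
  have hmzT : -z ∈ T := by
    by_contra hnz
    obtain ⟨f₂, c, hf₂z, hf₂T⟩ :=
      geometric_hahn_banach_point_closed (hS₀cv.closure) isClosed_closure hnz
    have hc0 : c < 0 := by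
      have := hf₂T 0 (subset_closure h0S)
      simpa using this
    have hf₂T0 : ∀ v ∈ T, (0:ℝ) ≤ f₂ v := by
      intro v hv
      by_contra hlt
      push_neg at hlt
      have hc2 : 0 < (c - 1) / f₂ v := div_pos_of_neg_of_neg (by linarith) hlt
      have h2 := hf₂T _ (hTsmul _ (le_of_lt hc2) v hv)
      rw [_root_.map_smul, smul_eq_mul, div_mul_cancel₀ _ (ne_of_lt hlt)] at h2
      linarith
    set z₂ := (InnerProductSpace.toDual ℝ (EuclideanSpace ℝ (Fin p))).symm f₂ with hz₂def
    have hz₂ : ∀ y, ⟪z₂, y⟫ = f₂ y := fun y => InnerProductSpace.toDual_symm_apply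
    have haN : -z₂ ∈ N := by
      intro y hy
      have hyT : y - x ∈ T := subset_closure ⟨1, zero_le_one, y, hy, (one_smul ℝ _).symm⟩
      have h4 := hf₂T0 _ hyT
      rw [← hz₂] at h4
      rw [inner_neg_left]
      linarith
    have h5 := hfN0 _ haN
    rw [← hz] at h5
    rw [inner_neg_right] at h5
    have h6 : f₂ (-z) < c := hf₂z
    rw [← hz₂, inner_neg_right, real_inner_comm] at h6
    linarith
  have hφT : ∀ v ∈ T, 0 ≤ ⟪g, v⟫ + u * cnorm1 (psiH Ψ v) := by
    have hcont : Continuous fun v : EuclideanSpace ℝ (Fin p) =>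
        ⟪g, v⟫ + u * cnorm1 (psiH Ψ v) :=
      (continuous_const.inner continuous_id).add
        (continuous_const.mul (continuous_cnorm1_psiH Ψ))
    have hclosed : IsClosed {v : EuclideanSpace ℝ (Fin p) |
        0 ≤ ⟪g, v⟫ + u * cnorm1 (psiH Ψ v)} := isClosed_le continuous_const hcont
    have hsub : S₀ ⊆ {v : EuclideanSpace ℝ (Fin p) | 0 ≤ ⟪g, v⟫ + u * cnorm1 (psiH Ψ v)} := by
      rintro v ⟨l, hl, y, hy, rfl⟩
      have hstep := step1 hCcv hL hx hx0 hu hXu hy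
      have e1 : ⟪g, l • (y - x)⟫ = l * ⟪g, y - x⟫ := real_inner_smul_right g _ l
      have e2 : cnorm1 (psiH Ψ (l • (y - x))) = l * cnorm1 (psiH Ψ (y - x)) := by
        have : psiH Ψ (l • (y - x)) = fun j => (l : ℂ) * psiH Ψ (y - x) j := by
          funext j; exact psiH_smul Ψ _ l j
        rw [this, cnorm1_smul, abs_of_nonneg hl]
      simp only [Set.mem_setOf_eq]
      rw [e1, e2]
      nlinarith
    exact fun v hv => closure_minimal hsub hclosed hv
  have hφz := hφT _ hmzT
  obtain ⟨w', hw'1, hw'2⟩ := exists_w_attain Ψ (-z)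
  have hk : -g - u • rePsi Ψ w' ∈ K := ⟨w', hw'1, rfl⟩
  have h1 := hfK _ hk
  rw [← hz, inner_sub_right, inner_neg_right, real_inner_smul_right] at h1
  rw [← hw'2, inner_neg_right, inner_neg_right, real_inner_comm] at hφz
  have h7 : ⟪z, rePsi Ψ w'⟫ = ⟪rePsi Ψ w', z⟫ := real_inner_comm _ _
  rw [h7] at h1
  linarith

lemma isUnit_det_of_rank_eq {d : ℕ} (M : Matrix (Fin d) (Fin d) ℝ) (h : M.rank = d) :
    IsUnit M.det := by
  rw [← Matrix.isUnit_iff_isUnit_det, ← Matrix.mulVec_surjective_iff_isUnit]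
  have hr : Module.finrank ℝ (LinearMap.range M.mulVecLin) = d := h
  have htop : LinearMap.range M.mulVecLin = ⊤ := by
    apply Submodule.eq_top_of_finrank_eq
    rw [hr]
    simp [Module.finrank_pi]
  intro v
  obtain ⟨w, hw⟩ := LinearMap.range_eq_top.mp htop v
  exact ⟨w, by simpa [Matrix.mulVecLin_apply] using hw⟩

lemma reZZH {d p' : ℕ} (Z : Matrix (Fin d) (Fin p') ℂ) :
    ((Z * Zᴴ).map Complex.re) =
      (fromCols (Z.map Complex.re) (Z.map Complex.im)) *
        (fromCols (Z.map Complex.re) (Z.map Complex.im))ᵀ := by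
  rw [transpose_fromCols, fromCols_mul_fromRows]
  ext i k
  rw [Matrix.map_apply, Matrix.mul_apply, Complex.re_sum, Matrix.add_apply,
    Matrix.mul_apply, Matrix.mul_apply, ← Finset.sum_add_distrib]
  refine Finset.sum_congr rfl fun j _ => ?_
  simp only [Matrix.conjTranspose_apply, Matrix.transpose_apply, Matrix.map_apply,
    Complex.mul_re, RCLike.star_def, Complex.conj_re, Complex.conj_im]
  ring

lemma FtF_unit {p d : ℕ} (F : Matrix (Fin p) (Fin d) ℝ) (hF : F.rank = d) :
    IsUnit (Fᵀ * F).det :=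
  isUnit_det_of_rank_eq _ (by rw [Matrix.rank_transpose_mul_self]; exact hF)

lemma Fpinv_mulVec {p d : ℕ} (F : Matrix (Fin p) (Fin d) ℝ) (hF : F.rank = d)
    (c : Fin d → ℝ) : (Fpinv F).mulVec (F.mulVec c) = c := by
  rw [Matrix.mulVec_mulVec]
  rw [Fpinv, Matrix.mul_assoc, Matrix.nonsing_inv_mul _ (FtF_unit F hF), Matrix.one_mulVec]

lemma re_mulVec_Zddag {d p' : ℕ} (Z : Matrix (Fin d) (Fin p') ℂ)
    (hM : IsUnit ((Z * Zᴴ).map Complex.re).det) (r : Fin d → ℝ) (i : Fin d) :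
    (Z.mulVec ((Zddag Z).mulVec (fun k => (r k : ℂ))) i).re = r i := by
  set M := (Z * Zᴴ).map Complex.re with hMdef
  have hvec : (M⁻¹.map Complex.ofReal).mulVec (fun k => (r k : ℂ))
      = fun k => ((M⁻¹.mulVec r k : ℝ) : ℂ) := by
    funext k
    rw [Matrix.mulVec, dotProduct, Matrix.mulVec, dotProduct, Complex.ofReal_sum]
    refine Finset.sum_congr rfl fun l _ => ?_
    simp [Matrix.map_apply]
  have h1 : (Zddag Z).mulVec (fun k => (r k : ℂ))
      = Zᴴ.mulVec (fun k => ((M⁻¹.mulVec r k : ℝ) : ℂ)) := by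
    rw [Zddag, ← Matrix.mulVec_mulVec, ← hMdef, hvec]
  rw [h1, Matrix.mulVec_mulVec]
  have h2 : (((Z * Zᴴ).mulVec (fun k => ((M⁻¹.mulVec r k : ℝ) : ℂ))) i).re
      = M.mulVec (M⁻¹.mulVec r) i := by
    rw [Matrix.mulVec, dotProduct, Complex.re_sum, Matrix.mulVec, dotProduct]
    refine Finset.sum_congr rfl fun l _ => ?_
    rw [mul_comm ((Z * Zᴴ) i l), Complex.re_ofReal_mul, hMdef, Matrix.map_apply]
    ring
  rw [h2, Matrix.mulVec_mulVec, Matrix.mul_nonsing_inv _ hM, Matrix.one_mulVec]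

lemma rePsi_fac {p p' d : ℕ} (F : Matrix (Fin p) (Fin d) ℝ) (Z : Matrix (Fin d) (Fin p') ℂ)
    (t : Fin p' → ℂ) (i : Fin p) :
    rePsi (F.map Complex.ofReal * Z) t i = F.mulVec (fun k => (Z.mulVec t k).re) i := by
  rw [rePsi, WithLp.ofLp_toLp, ← Matrix.mulVec_mulVec]
  dsimp only
  rw [Matrix.mulVec, dotProduct, Complex.re_sum, Matrix.mulVec, dotProduct]
  refine Finset.sum_congr rfl fun k _ => ?_
  rw [Matrix.map_apply, Complex.re_ofReal_mul]

end Statement11Aux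

open Statement11Aux

theorem statement_11 {p p' d : ℕ} (hp : 0 < p) (hp' : 0 < p') (hd : 0 < d)
    (C : Set (EuclideanSpace ℝ (Fin p))) (hCne : C.Nonempty) (hCcl : IsClosed C)
    (hCcv : Convex ℝ C)
    (L : EuclideanSpace ℝ (Fin p) → ℝ) (hLcv : ConvexOn ℝ Set.univ L)
    (gradL : EuclideanSpace ℝ (Fin p) → EuclideanSpace ℝ (Fin p))
    (hLd : ∀ x, HasGradientAt L (gradL x) x)
    (hLb : BddBelow (L '' C))
    (Ψ : Matrix (Fin p) (Fin p') ℂ) (hXd : (XdSet C L Ψ).Nonempty)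
    (hbar : ∃ x ∈ C, psiH Ψ x = 0)
    (hdim : Module.finrank ℝ
      (Submodule.span ℝ {v : EuclideanSpace ℝ (Fin p) | ∃ w : Fin p' → ℂ, rePsi Ψ w = v}) = d)
    (F : Matrix (Fin p) (Fin d) ℝ) (Z : Matrix (Fin d) (Fin p') ℂ)
    (hfac : Ψ = F.map Complex.ofReal * Z)
    (hF : F.rank = d)
    (hZ : (Matrix.fromCols (Z.map Complex.re) (Z.map Complex.im)).rank = d) :
    IsUnit ((Z * Zᴴ).map Complex.re).det ∧
    ∀ xd ∈ XdSet C L Ψ,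
      sInf (ENNReal.ofReal '' {r : ℝ | ∃ t : Fin p' → ℂ, ∃ a ∈ normalCone C xd,
          (∃ c : Fin d → ℝ, F.mulVec c = fun i => gradL xd i + a i) ∧
          r = cnormInf (pvec F Z (gradL xd) a t)})
        = Ubound C L Ψ := by
  classical
  have hMrank : ((Z * Zᴴ).map Complex.re).rank = d := by
    rw [reZZH Z, Matrix.rank_self_mul_transpose]
    exact hZ
  have hMunit : IsUnit ((Z * Zᴴ).map Complex.re).det := isUnit_det_of_rank_eq _ hMrank
  refine ⟨hMunit, ?_⟩
  intro xd hxd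
  haveI : Nonempty (Fin p') := ⟨⟨0, hp'⟩⟩
  obtain ⟨xb, hxbC, hxb0⟩ := hbar
  have hcn0 : cnorm1 (0 : Fin p' → ℂ) = 0 := by simp [cnorm1]
  have hQ : ∀ x, x ∈ QSet C Ψ ↔ x ∈ C ∧ psiH Ψ x = 0 := by
    intro x
    constructor
    · rintro ⟨hxC, hxm⟩
      refine ⟨hxC, cnorm1_eq_zero (le_antisymm ?_ (cnorm1_nonneg _))⟩
      have h0 := hxm xb hxbC
      rw [hxb0, hcn0] at h0
      exact h0
    · rintro ⟨hxC, hx0⟩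
      refine ⟨hxC, fun χ hχ => ?_⟩
      rw [hx0, hcn0]
      exact cnorm1_nonneg _
  have hxdQ := hxd.1
  have hxdC : xd ∈ C := hxdQ.1
  have hxd0 : psiH Ψ xd = 0 := ((hQ xd).mp hxdQ).2
  have hxdzero : cnorm1 (psiH Ψ xd) = 0 := by rw [hxd0]; exact hcn0
  set g := gradL xd with hgdef
  have htrans : ∀ u : ℝ, (XuSet C L Ψ u ∩ QSet C Ψ).Nonempty →
      ∀ χ ∈ C, L xd + u * cnorm1 (psiH Ψ xd) ≤ L χ + u * cnorm1 (psiH Ψ χ) := by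
    rintro u ⟨x, hxXu, hxQ⟩ χ hχ
    have hx0' : cnorm1 (psiH Ψ x) = 0 := by rw [((hQ x).mp hxQ).2]; exact hcn0
    have hLle : L xd ≤ L x := hxd.2 x hxQ
    have h2 := hxXu.2 χ hχ
    rw [hx0', mul_zero, add_zero] at h2
    rw [hxdzero, mul_zero, add_zero]
    linarith
  unfold Ubound
  apply le_antisymm
  · refine le_sInf ?_
    rintro b ⟨u, ⟨hu0, hne⟩, rfl⟩
    have hXuxd := htrans u hne
    obtain ⟨t, a, haN, hta, htu⟩ := necessity hCcv (hLd xd) hxdC hxd0 hu0 hXuxd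
    have hfc : F.mulVec (fun k => (Z.mulVec t k).re) = fun i => g i + a i := by
      funext i
      rw [← rePsi_fac F Z t i, ← hfac]
      exact congrFun hta i
    have hFp : (Fpinv F).mulVec (fun i => g i + a i) = fun k => (Z.mulVec t k).re := by
      rw [← hfc, Fpinv_mulVec F hF]
    have hpv : pvec F Z g a t = t := by
      unfold pvec
      have hz : (fun i =>
          (((Fpinv F).mulVec (fun j => g j + a j) i - (Z.mulVec t i).re : ℝ) : ℂ))
          = fun _ => (0 : ℂ) := by
        funext i
        rw [show ((Fpinv F).mulVec (fun j => g j + a j)) i = (Z.mulVec t i).re from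
          congrFun hFp i]
        simp
      rw [hz]
      have : (Zddag Z).mulVec (fun _ => (0:ℂ)) = 0 := by
        have : (fun _ : Fin d => (0:ℂ)) = (0 : Fin d → ℂ) := rfl
        rw [this, Matrix.mulVec_zero]
      rw [this, add_zero]
    refine le_trans (sInf_le ?_) (ENNReal.ofReal_le_ofReal (cnormInf_le htu))
    exact ⟨cnormInf t, ⟨t, a, haN, ⟨⟨fun k => (Z.mulVec t k).re, hfc⟩, by rw [hpv]⟩⟩, rfl⟩
  · refine le_sInf ?_
    rintro b ⟨r, ⟨t, a, haN, ⟨⟨c, hc⟩, hr⟩⟩, rfl⟩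
    set q₀ : Fin d → ℝ :=
      fun i => (Fpinv F).mulVec (fun j => g j + a j) i - (Z.mulVec t i).re with hq₀
    set t' := pvec F Z g a t with ht'
    have ht'eq : t' = t + (Zddag Z).mulVec (fun i => (q₀ i : ℂ)) := rfl
    have hZt' : ∀ k, (Z.mulVec t' k).re = (Fpinv F).mulVec (fun i => g i + a i) k := by
      intro k
      rw [ht'eq, Matrix.mulVec_add]
      have h2 := re_mulVec_Zddag Z hMunit q₀ k
      simp only [Pi.add_apply, Complex.add_re]
      rw [h2]
      simp only [hq₀]
      ring
    have hFpc : (Fpinv F).mulVec (fun i => g i + a i) = c := by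
      rw [← hc, Fpinv_mulVec F hF]
    have hkey : rePsi Ψ t' = fun i => g i + a i := by
      funext i
      rw [hfac, rePsi_fac F Z t' i]
      have hcc : (fun k => (Z.mulVec t' k).re) = c := by
        funext k
        rw [hZt' k]
        exact congrFun hFpc k
      rw [hcc, hc]
    have hr0 : 0 ≤ r := by rw [hr]; exact cnormInf_nonneg _
    have htu : ∀ j, ‖t' j‖ ≤ r := by
      intro j; rw [hr]; exact abs_le_cnormInf _ j
    have hXu := sufficiency hLcv (hLd xd) hxd0 hr0 haN hkey htu
    exact sInf_le ⟨r, ⟨hr0, ⟨xd, ⟨hxdC, hXu⟩, hxdQ⟩⟩, rfl⟩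
end
end

section
/- (Example: nonnegative signal, real invertible dictionary) Let Ψ be a real invertible p × p matrix and C = ℝ₊^p = {x ∈ ℝ^p : x ⪰ 0}. Then X⋄ = Q = {0} and U = inf { ‖Ψ⁻¹(∇L(0) + a)‖_∞ : a ∈ ℝ^p, a ⪯ 0 }. In particular, if ∇L(0) ⪰ 0 (all coordinates nonnegative), then U = 0, i.e., signal sparsity regularization is irrelevant; and if Ψ = I, then U = −min(0, min_i [∇L(0)]_i). -/
open Matrix
open scoped RealInnerProductSpace ENNReal

noncomputable section

def rnorm1 {n : ℕ} (z : Fin n → ℝ) : ℝ := ∑ j, |z j|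

noncomputable def rnormInf {n : ℕ} (z : Fin n → ℝ) : ℝ := ⨆ j, |z j|

/-- `Ψᵀ x` for a real dictionary `Ψ`. -/
def psiT {p q : ℕ} (Ψ : Matrix (Fin p) (Fin q) ℝ) (x : EuclideanSpace ℝ (Fin p)) :
    Fin q → ℝ :=
  Matrix.mulVec Ψᵀ fun i => x i

def XuSetR {p q : ℕ} (C : Set (EuclideanSpace ℝ (Fin p))) (L : EuclideanSpace ℝ (Fin p) → ℝ)
    (Ψ : Matrix (Fin p) (Fin q) ℝ) (u : ℝ) : Set (EuclideanSpace ℝ (Fin p)) :=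
  {x ∈ C | ∀ χ ∈ C, L x + u * rnorm1 (psiT Ψ x) ≤ L χ + u * rnorm1 (psiT Ψ χ)}

def QSetR {p q : ℕ} (C : Set (EuclideanSpace ℝ (Fin p))) (Ψ : Matrix (Fin p) (Fin q) ℝ) :
    Set (EuclideanSpace ℝ (Fin p)) :=
  {x ∈ C | ∀ χ ∈ C, rnorm1 (psiT Ψ x) ≤ rnorm1 (psiT Ψ χ)}

def XdSetR {p q : ℕ} (C : Set (EuclideanSpace ℝ (Fin p))) (L : EuclideanSpace ℝ (Fin p) → ℝ)
    (Ψ : Matrix (Fin p) (Fin q) ℝ) : Set (EuclideanSpace ℝ (Fin p)) :=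
  {x ∈ QSetR C Ψ | ∀ χ ∈ QSetR C Ψ, L x ≤ L χ}

def UboundR {p q : ℕ} (C : Set (EuclideanSpace ℝ (Fin p))) (L : EuclideanSpace ℝ (Fin p) → ℝ)
    (Ψ : Matrix (Fin p) (Fin q) ℝ) : ℝ≥0∞ :=
  sInf (ENNReal.ofReal '' {u : ℝ | 0 ≤ u ∧ (XuSetR C L Ψ u ∩ QSetR C Ψ).Nonempty})

section Aux

open Filter Set
open scoped Topology

variable {p : ℕ}

lemma rnorm1_nonneg {n : ℕ} (z : Fin n → ℝ) : 0 ≤ rnorm1 z :=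
  Finset.sum_nonneg fun j _ => abs_nonneg _

lemma psiT_zero {q : ℕ} (Ψ : Matrix (Fin p) (Fin q) ℝ) : psiT Ψ 0 = 0 := by
  unfold psiT
  have : (fun i => (0 : EuclideanSpace ℝ (Fin p)) i) = (0 : Fin p → ℝ) := rfl
  rw [this, Matrix.mulVec_zero]

lemma psiT_smul {q : ℕ} (Ψ : Matrix (Fin p) (Fin q) ℝ) (t : ℝ) (x : EuclideanSpace ℝ (Fin p)) :
    psiT Ψ (t • x) = t • psiT Ψ x := by
  unfold psiT
  have : (fun i => (t • x : EuclideanSpace ℝ (Fin p)) i) = t • (fun i => x i) := rfl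
  rw [this, Matrix.mulVec_smul]

lemma rnorm1_smul {n : ℕ} (t : ℝ) (z : Fin n → ℝ) : rnorm1 (t • z) = |t| * rnorm1 z := by
  unfold rnorm1
  rw [Finset.mul_sum]
  exact Finset.sum_congr rfl fun j _ => by simp [abs_mul]

lemma abs_le_rnormInf {n : ℕ} (z : Fin n → ℝ) (j : Fin n) : |z j| ≤ rnormInf z := by
  unfold rnormInf
  exact le_ciSup (Set.Finite.bddAbove (Set.finite_range fun j => |z j|)) j

lemma rnormInf_nonneg {n : ℕ} (hn : 0 < n) (z : Fin n → ℝ) : 0 ≤ rnormInf z :=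
  le_trans (abs_nonneg (z ⟨0, hn⟩)) (abs_le_rnormInf z ⟨0, hn⟩)

/-- `Q = {0}` when the dictionary is invertible. -/
theorem Q_eq (Ψ : Matrix (Fin p) (Fin p) ℝ) (hΨ : IsUnit Ψ.det) :
    QSetR {x : EuclideanSpace ℝ (Fin p) | ∀ i, 0 ≤ x i} Ψ = {0} := by
  have h0mem : (0 : EuclideanSpace ℝ (Fin p)) ∈
      {x : EuclideanSpace ℝ (Fin p) | ∀ i, 0 ≤ x i} := fun i => le_refl _
  ext x
  constructor
  · rintro ⟨hx, hmin⟩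
    have h1 := hmin 0 h0mem
    rw [psiT_zero] at h1
    have h0 : rnorm1 (0 : Fin p → ℝ) = 0 := by simp [rnorm1]
    rw [h0] at h1
    have hzero : rnorm1 (psiT Ψ x) = 0 := le_antisymm h1 (rnorm1_nonneg _)
    have hall : ∀ j, psiT Ψ x j = 0 := by
      intro j
      have := (Finset.sum_eq_zero_iff_of_nonneg (fun j _ => abs_nonneg (psiT Ψ x j))).mp hzero
        j (Finset.mem_univ j)
      exact abs_eq_zero.mp this
    have hfun : Ψᵀ.mulVec (fun i => x i) = 0 := funext hall
    have hdet : IsUnit Ψᵀ.det := by rwa [Matrix.det_transpose]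
    have hxf : (fun i => x i) = (0 : Fin p → ℝ) := by
      have := congrArg (fun v => (Ψᵀ)⁻¹.mulVec v) hfun
      simpa [Matrix.mulVec_mulVec, Matrix.nonsing_inv_mul _ hdet, Matrix.one_mulVec,
        Matrix.mulVec_zero] using this
    have : x = 0 := by
      ext i
      exact congrFun hxf i
    simpa using this
  · rintro rfl
    refine ⟨h0mem, fun χ _ => ?_⟩
    rw [psiT_zero]
    simpa [rnorm1] using rnorm1_nonneg (psiT Ψ χ)

/-- Directional derivative of `L` at `0` along `χ`. -/
theorem dirSlope (L : EuclideanSpace ℝ (Fin p) → ℝ) (g : EuclideanSpace ℝ (Fin p))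
    (hL : HasGradientAt L g 0) (χ : EuclideanSpace ℝ (Fin p)) :
    Tendsto (fun t : ℝ => (L (t • χ) - L 0) / t) (𝓝[>] (0:ℝ)) (𝓝 ⟪g, χ⟫) := by
  have hF : HasFDerivAt L ((InnerProductSpace.toDual ℝ _) g : _ →L[ℝ] ℝ) 0 := hL.hasFDerivAt
  have hc : HasDerivAt (fun t : ℝ => t • χ) χ 0 := by
    simpa using (hasDerivAt_id (0:ℝ)).smul_const χ
  have hF' : HasFDerivAt L ((InnerProductSpace.toDual ℝ _) g : _ →L[ℝ] ℝ)
      ((fun t : ℝ => t • χ) 0) := by simpa using hF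
  have hd : HasDerivAt (fun t : ℝ => L (t • χ)) (⟪g, χ⟫) 0 := by
    have := hF'.comp_hasDerivAt 0 hc
    simpa [InnerProductSpace.toDual_apply_apply, Function.comp_def] using this
  have htend := hasDerivAt_iff_tendsto_slope.mp hd
  have hmono : 𝓝[>] (0:ℝ) ≤ 𝓝[≠] (0:ℝ) :=
    nhdsWithin_mono 0 fun x hx => ne_of_gt hx
  refine (htend.mono_left hmono).congr' ?_
  filter_upwards [self_mem_nhdsWithin] with t ht
  simp [slope_def_field]

/-- Membership of `0` in `X_u` is equivalent to the first-order condition. -/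
theorem mem_Xu_iff (Ψ : Matrix (Fin p) (Fin p) ℝ)
    (L : EuclideanSpace ℝ (Fin p) → ℝ) (hLcv : ConvexOn ℝ Set.univ L)
    (g : EuclideanSpace ℝ (Fin p)) (hL : HasGradientAt L g 0) (u : ℝ) :
    (0 : EuclideanSpace ℝ (Fin p)) ∈
        XuSetR {x : EuclideanSpace ℝ (Fin p) | ∀ i, 0 ≤ x i} L Ψ u ↔
      ∀ χ : EuclideanSpace ℝ (Fin p), (∀ i, 0 ≤ χ i) →
        0 ≤ ⟪g, χ⟫ + u * rnorm1 (psiT Ψ χ) := by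
  have h0mem : (0 : EuclideanSpace ℝ (Fin p)) ∈
      {x : EuclideanSpace ℝ (Fin p) | ∀ i, 0 ≤ x i} := fun i => le_refl _
  constructor
  · rintro ⟨-, hmin⟩ χ hχ
    have key : ∀ t : ℝ, 0 < t → -(u * rnorm1 (psiT Ψ χ)) ≤ (L (t • χ) - L 0) / t := by
      intro t ht
      have htχ : (t • χ : EuclideanSpace ℝ (Fin p)) ∈
          {x : EuclideanSpace ℝ (Fin p) | ∀ i, 0 ≤ x i} := by
        intro i
        have : (t • χ : EuclideanSpace ℝ (Fin p)) i = t * χ i := rfl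
        rw [this]
        exact mul_nonneg ht.le (hχ i)
      have h1 := hmin (t • χ) htχ
      rw [psiT_zero, psiT_smul, rnorm1_smul, abs_of_pos ht] at h1
      have h2 : rnorm1 (0 : Fin p → ℝ) = 0 := by simp [rnorm1]
      rw [h2] at h1
      rw [le_div_iff₀ ht]
      nlinarith [h1]
    have := ge_of_tendsto (dirSlope L g hL χ)
      (eventually_nhdsWithin_of_forall fun t ht => key t ht)
    linarith
  · intro h
    refine ⟨h0mem, fun χ hχ => ?_⟩
    have hgrad : ⟪g, χ⟫ ≤ L χ - L 0 := by
      have key : ∀ t : ℝ, t ∈ Ioo (0:ℝ) 1 → (L (t • χ) - L 0) / t ≤ L χ - L 0 := by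
        rintro t ⟨ht0, ht1⟩
        have hconv := hLcv.2 (Set.mem_univ 0) (Set.mem_univ χ)
          (by linarith : (0:ℝ) ≤ 1 - t) ht0.le (by ring)
        have h0 : ((1 - t) • (0 : EuclideanSpace ℝ (Fin p)) + t • χ) = t • χ := by
          simp
        rw [h0] at hconv
        simp only [smul_eq_mul] at hconv
        rw [div_le_iff₀ ht0]
        nlinarith [hconv]
      exact le_of_tendsto (dirSlope L g hL χ)
        (Filter.eventually_of_mem
          (Ioo_mem_nhdsGT_of_mem (by norm_num : (0:ℝ) ∈ Ico (0:ℝ) 1)) key)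
    have := h χ hχ
    rw [psiT_zero]
    have h2 : rnorm1 (0 : Fin p → ℝ) = 0 := by simp [rnorm1]
    rw [h2]
    linarith

lemma euclid_sum_single (x : EuclideanSpace ℝ (Fin p)) :
    ∑ i, x i • EuclideanSpace.single i (1:ℝ) = x := by
  have h := (EuclideanSpace.basisFun (Fin p) ℝ).toBasis.sum_repr x
  simpa [OrthonormalBasis.coe_toBasis, EuclideanSpace.basisFun_apply] using h

/-- The separation argument: the first-order condition forces a feasible `w`. -/
theorem sep_exists (hp : 0 < p) (Ψ : Matrix (Fin p) (Fin p) ℝ)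
    (g : EuclideanSpace ℝ (Fin p)) (u : ℝ) (hu : 0 ≤ u)
    (h : ∀ χ : EuclideanSpace ℝ (Fin p), (∀ i, 0 ≤ χ i) →
      0 ≤ ⟪g, χ⟫ + u * rnorm1 (psiT Ψ χ)) :
    ∃ w : Fin p → ℝ, (∀ j, |w j| ≤ u) ∧ ∀ i, 0 ≤ g i + Ψ.mulVec w i := by
  classical
  set e : (Fin p → ℝ) ≃L[ℝ] EuclideanSpace ℝ (Fin p) :=
    (EuclideanSpace.equiv (Fin p) ℝ).symm with he
  set T : (Fin p → ℝ) → EuclideanSpace ℝ (Fin p) :=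
    fun w => e (fun i => g i + Ψ.mulVec w i) with hT
  have hTapp : ∀ w i, (T w) i = g i + Ψ.mulVec w i := fun w i => rfl
  set B : Set (Fin p → ℝ) := {w | ∀ j, |w j| ≤ u} with hB
  set S : Set (EuclideanSpace ℝ (Fin p)) := T '' B with hS
  set CC : Set (EuclideanSpace ℝ (Fin p)) := {x | ∀ i, 0 ≤ x i} with hCC
  by_contra hcon
  push_neg at hcon
  have hBeq : B = Set.pi Set.univ (fun _ : Fin p => Icc (-u) u) := by
    ext w
    simp only [hB, Set.mem_setOf_eq, Set.mem_pi, Set.mem_univ, forall_true_left,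
      Set.mem_Icc, abs_le]
  have hBcomp : IsCompact B := by
    rw [hBeq]; exact isCompact_univ_pi fun _ => isCompact_Icc
  have hmulVec_cont : ∀ i : Fin p, Continuous fun w : Fin p → ℝ => Ψ.mulVec w i := by
    intro i
    simp only [Matrix.mulVec, dotProduct]
    exact continuous_finset_sum _ fun j _ => continuous_const.mul (continuous_apply j)
  have hTcont : Continuous T :=
    e.continuous.comp (continuous_pi fun i => continuous_const.add (hmulVec_cont i))
  have hScomp : IsCompact S := hBcomp.image hTcont
  have hSconv : Convex ℝ S := by
    rintro x ⟨w1, hw1, rfl⟩ y ⟨w2, hw2, rfl⟩ a b ha hb hab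
    refine ⟨a • w1 + b • w2, fun j => ?_, ?_⟩
    · have h1 : |a * w1 j + b * w2 j| ≤ a * |w1 j| + b * |w2 j| := by
        calc |a * w1 j + b * w2 j| ≤ |a * w1 j| + |b * w2 j| := abs_add_le _ _
        _ = a * |w1 j| + b * |w2 j| := by rw [abs_mul, abs_mul, abs_of_nonneg ha, abs_of_nonneg hb]
      calc |(a • w1 + b • w2) j| = |a * w1 j + b * w2 j| := rfl
      _ ≤ a * |w1 j| + b * |w2 j| := h1
      _ ≤ a * u + b * u := by gcongr <;> [exact hw1 j; exact hw2 j]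
      _ = u := by rw [← add_mul, hab, one_mul]
    · apply PiLp.ext
      intro i
      have h1 : (a • T w1 + b • T w2 : EuclideanSpace ℝ (Fin p)) i =
          a * (T w1) i + b * (T w2) i := rfl
      rw [h1, hTapp, hTapp, hTapp]
      rw [Matrix.mulVec_add, Matrix.mulVec_smul, Matrix.mulVec_smul]
      simp only [Pi.add_apply, Pi.smul_apply, smul_eq_mul]
      linear_combination (g i) * hab.symm
  have hCconv : Convex ℝ CC := by
    rintro x hx y hy a b ha hb hab i
    have h1 : (a • x + b • y : EuclideanSpace ℝ (Fin p)) i = a * x i + b * y i := rfl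
    rw [h1]
    exact add_nonneg (mul_nonneg ha (hx i)) (mul_nonneg hb (hy i))
  have hCclosed : IsClosed CC := by
    have hiC : CC = ⋂ i, {x : EuclideanSpace ℝ (Fin p) | 0 ≤ x i} := by
      ext x; simp [hCC, Set.mem_iInter]
    rw [hiC]
    exact isClosed_iInter fun i =>
      isClosed_le continuous_const (EuclideanSpace.proj i).continuous
  have hdisj : Disjoint S CC := by
    rw [Set.disjoint_left]
    rintro x ⟨w, hw, rfl⟩ hxC
    obtain ⟨i, hi⟩ := hcon w hw
    have := hxC i
    rw [hTapp] at this
    linarith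
  obtain ⟨f, α, β, hfα, hαβ, hfβ⟩ :=
    geometric_hahn_banach_compact_closed hSconv hScomp hCconv hCclosed hdisj
  have h0C : (0 : EuclideanSpace ℝ (Fin p)) ∈ CC := fun i => le_refl _
  have hβ0 : β < 0 := by simpa using hfβ 0 h0C
  set χ : EuclideanSpace ℝ (Fin p) := e (fun i => f (EuclideanSpace.single i 1)) with hχ
  have hχapp : ∀ i, χ i = f (EuclideanSpace.single i 1) := fun i => rfl
  have hχnn : ∀ i, 0 ≤ χ i := by
    intro i
    rw [hχapp]
    by_contra hneg
    push_neg at hneg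
    set t : ℝ := (β - 1) / f (EuclideanSpace.single i 1) with ht
    have ht0 : 0 < t := div_pos_of_neg_of_neg (by linarith) hneg
    have htmem : (t • EuclideanSpace.single i (1:ℝ) : EuclideanSpace ℝ (Fin p)) ∈ CC := by
      intro j
      have hsj : (t • EuclideanSpace.single i (1:ℝ) : EuclideanSpace ℝ (Fin p)) j =
          t * (EuclideanSpace.single i (1:ℝ)) j := rfl
      rw [hsj, EuclideanSpace.single_apply]
      positivity
    have hb2 := hfβ _ htmem
    rw [f.map_smul, smul_eq_mul, ht, div_mul_cancel₀ _ (ne_of_lt hneg)] at hb2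
    linarith
  have hrep : ∀ x : EuclideanSpace ℝ (Fin p),
      f x = ∑ i, x i * f (EuclideanSpace.single i 1) := by
    intro x
    conv_lhs => rw [← euclid_sum_single x]
    rw [map_sum]
    exact Finset.sum_congr rfl fun i _ => by rw [f.map_smul, smul_eq_mul]
  set v : Fin p → ℝ := Ψᵀ.mulVec (fun i => χ i) with hv
  set w : Fin p → ℝ := fun j => if 0 ≤ v j then u else -u with hw
  have hwB : w ∈ B := by
    intro j
    by_cases hj : 0 ≤ v j <;> simp [hw, hj, abs_of_nonneg hu, hu]
  have hwv : ∀ j, v j * w j = u * |v j| := by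
    intro j
    by_cases hj : 0 ≤ v j
    · simp only [hw, if_pos hj]
      rw [abs_of_nonneg hj]; ring
    · simp only [hw, if_neg hj]
      push_neg at hj
      rw [abs_of_neg hj]; ring
  have hfs := hfα (T w) ⟨w, hwB, rfl⟩
  have hpsiv : psiT Ψ χ = v := rfl
  have hinner : ⟪g, χ⟫ = ∑ i, g i * χ i := by
    rw [PiLp.inner_apply]
    exact Finset.sum_congr rfl fun i _ => by simp [mul_comm]
  have hmul : ∑ i, Ψ.mulVec w i * χ i = u * rnorm1 (psiT Ψ χ) := by
    have h1 : ∑ i, Ψ.mulVec w i * χ i = (fun i => χ i) ⬝ᵥ Ψ.mulVec w := by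
      simp [dotProduct, mul_comm]
    rw [h1, Matrix.dotProduct_mulVec, ← Matrix.mulVec_transpose, ← hv, hpsiv]
    have h2 : v ⬝ᵥ w = ∑ j, v j * w j := rfl
    rw [h2, Finset.sum_congr rfl fun j _ => hwv j, ← Finset.mul_sum]
    rfl
  have hstep : f (T w) = ⟪g, χ⟫ + u * rnorm1 (psiT Ψ χ) := by
    rw [hrep (T w), hinner, ← hmul, ← Finset.sum_add_distrib]
    refine Finset.sum_congr rfl fun i _ => ?_
    rw [hTapp, ← hχapp]
    ring
  have hfin := h χ hχnn
  rw [← hstep] at hfin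
  linarith

/-- Full characterization of the first-order condition via the dual vector `a`. -/
theorem cond_iff (hp : 0 < p) (Ψ : Matrix (Fin p) (Fin p) ℝ) (hΨ : IsUnit Ψ.det)
    (g : EuclideanSpace ℝ (Fin p)) (u : ℝ) (hu : 0 ≤ u) :
    (∀ χ : EuclideanSpace ℝ (Fin p), (∀ i, 0 ≤ χ i) →
        0 ≤ ⟪g, χ⟫ + u * rnorm1 (psiT Ψ χ)) ↔
      ∃ a : EuclideanSpace ℝ (Fin p), (∀ i, a i ≤ 0) ∧
        rnormInf (Ψ⁻¹.mulVec fun i => g i + a i) ≤ u := by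
  have : Nonempty (Fin p) := ⟨⟨0, hp⟩⟩
  constructor
  · intro h
    obtain ⟨w, hwB, hwpos⟩ := sep_exists hp Ψ g u hu h
    refine ⟨(EuclideanSpace.equiv (Fin p) ℝ).symm (fun i => -(g i + Ψ.mulVec w i)),
      fun i => by
        show -(g i + Ψ.mulVec w i) ≤ 0
        linarith [hwpos i], ?_⟩
    have hfun : (fun i => g i +
        ((EuclideanSpace.equiv (Fin p) ℝ).symm (fun i => -(g i + Ψ.mulVec w i)) : _) i) =
        -(Ψ.mulVec w) := by
      funext i
      show g i + -(g i + Ψ.mulVec w i) = -(Ψ.mulVec w i)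
      ring
    rw [hfun, Matrix.mulVec_neg, Matrix.mulVec_mulVec, Matrix.nonsing_inv_mul _ hΨ,
      Matrix.one_mulVec]
    refine ciSup_le fun j => ?_
    simpa [abs_neg] using hwB j
  · rintro ⟨a, ha, hn⟩
    set w : Fin p → ℝ := Ψ⁻¹.mulVec (fun i => g i + a i) with hwdef
    have hΨw : Ψ.mulVec w = fun i => g i + a i := by
      rw [hwdef, Matrix.mulVec_mulVec, Matrix.mul_nonsing_inv _ hΨ, Matrix.one_mulVec]
    have hwb : ∀ j, |w j| ≤ u := fun j => (abs_le_rnormInf w j).trans hn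
    intro χ hχ
    set vv : Fin p → ℝ := psiT Ψ χ with hvv
    have hinner : ⟪g, χ⟫ = ∑ i, g i * χ i := by
      rw [PiLp.inner_apply]; exact Finset.sum_congr rfl fun i _ => by simp [mul_comm]
    have h1 : ∑ i, (g i + a i) * χ i ≤ ∑ i, g i * χ i := by
      refine Finset.sum_le_sum fun i _ => ?_
      nlinarith [ha i, hχ i]
    have h2 : ∑ i, (g i + a i) * χ i = ∑ j, vv j * w j := by
      have hd : ∑ i, Ψ.mulVec w i * χ i = (fun i => χ i) ⬝ᵥ Ψ.mulVec w := by
        simp [dotProduct, mul_comm]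
      calc ∑ i, (g i + a i) * χ i = ∑ i, Ψ.mulVec w i * χ i :=
            Finset.sum_congr rfl fun i _ => by rw [← congrFun hΨw i]
      _ = (fun i => χ i) ⬝ᵥ Ψ.mulVec w := hd
      _ = (Ψᵀ.mulVec fun i => χ i) ⬝ᵥ w := by
          rw [Matrix.dotProduct_mulVec, ← Matrix.mulVec_transpose]
      _ = ∑ j, vv j * w j := rfl
    have h3 : -(u * rnorm1 vv) ≤ ∑ j, vv j * w j := by
      have : ∀ j, -(u * |vv j|) ≤ vv j * w j := by
        intro j
        have habs : |vv j * w j| ≤ |vv j| * u := by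
          rw [abs_mul]
          exact mul_le_mul_of_nonneg_left (hwb j) (abs_nonneg _)
        nlinarith [neg_abs_le (vv j * w j)]
      calc -(u * rnorm1 vv) = ∑ j, -(u * |vv j|) := by
            simp [rnorm1, Finset.mul_sum]
      _ ≤ ∑ j, vv j * w j := Finset.sum_le_sum fun j _ => this j
    rw [hinner]
    have h4 : rnorm1 (psiT Ψ χ) = rnorm1 vv := rfl
    rw [h4]
    linarith [h1, h2, h3]

end Aux

theorem statement_14 {p : ℕ} (hp : 0 < p)
    (Ψ : Matrix (Fin p) (Fin p) ℝ) (hΨ : IsUnit Ψ.det)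
    (L : EuclideanSpace ℝ (Fin p) → ℝ) (hLcv : ConvexOn ℝ Set.univ L)
    (gradL : EuclideanSpace ℝ (Fin p) → EuclideanSpace ℝ (Fin p))
    (hLd : ∀ x, HasGradientAt L (gradL x) x)
    (hLb : BddBelow (L '' {x : EuclideanSpace ℝ (Fin p) | ∀ i, 0 ≤ x i})) :
    QSetR {x : EuclideanSpace ℝ (Fin p) | ∀ i, 0 ≤ x i} Ψ = {0} ∧
    XdSetR {x : EuclideanSpace ℝ (Fin p) | ∀ i, 0 ≤ x i} L Ψ = {0} ∧
    UboundR {x : EuclideanSpace ℝ (Fin p) | ∀ i, 0 ≤ x i} L Ψ =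
      sInf (ENNReal.ofReal '' {r : ℝ | ∃ a : EuclideanSpace ℝ (Fin p), (∀ i, a i ≤ 0) ∧
        r = rnormInf (Ψ⁻¹.mulVec fun i => gradL 0 i + a i)}) ∧
    ((∀ i, 0 ≤ gradL 0 i) →
      UboundR {x : EuclideanSpace ℝ (Fin p) | ∀ i, 0 ≤ x i} L Ψ = 0) ∧
    (Ψ = 1 →
      UboundR {x : EuclideanSpace ℝ (Fin p) | ∀ i, 0 ≤ x i} L Ψ =
        ENNReal.ofReal (-min 0 (⨅ i, gradL 0 i))) := by
  have hne : Nonempty (Fin p) := ⟨⟨0, hp⟩⟩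
  set Cs : Set (EuclideanSpace ℝ (Fin p)) := {x | ∀ i, 0 ≤ x i} with hCs
  have hQ : QSetR Cs Ψ = {0} := Q_eq Ψ hΨ
  have h0Q : (0 : EuclideanSpace ℝ (Fin p)) ∈ QSetR Cs Ψ := by rw [hQ]; rfl
  have hint : ∀ u : ℝ, (XuSetR Cs L Ψ u ∩ QSetR Cs Ψ).Nonempty ↔
      (0 : EuclideanSpace ℝ (Fin p)) ∈ XuSetR Cs L Ψ u := by
    intro u
    constructor
    · rintro ⟨x, hxX, hxQ⟩
      rw [hQ, Set.mem_singleton_iff] at hxQ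
      rwa [hxQ] at hxX
    · intro h0
      exact ⟨0, h0, h0Q⟩
  have hcond : ∀ u : ℝ, 0 ≤ u →
      ((XuSetR Cs L Ψ u ∩ QSetR Cs Ψ).Nonempty ↔
        ∃ a : EuclideanSpace ℝ (Fin p), (∀ i, a i ≤ 0) ∧
          rnormInf (Ψ⁻¹.mulVec fun i => gradL 0 i + a i) ≤ u) := by
    intro u hu
    rw [hint u, mem_Xu_iff Ψ L hLcv (gradL 0) (hLd 0) u]
    exact cond_iff hp Ψ hΨ (gradL 0) u hu
  have hXd : XdSetR Cs L Ψ = {0} := by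
    ext x
    constructor
    · rintro ⟨hxQ, -⟩
      rw [hQ] at hxQ
      exact hxQ
    · rintro hx
      rw [Set.mem_singleton_iff] at hx
      subst hx
      refine ⟨h0Q, fun χ hχ => ?_⟩
      rw [hQ, Set.mem_singleton_iff] at hχ
      rw [hχ]
  have hU : UboundR Cs L Ψ =
      sInf (ENNReal.ofReal '' {r : ℝ | ∃ a : EuclideanSpace ℝ (Fin p), (∀ i, a i ≤ 0) ∧
        r = rnormInf (Ψ⁻¹.mulVec fun i => gradL 0 i + a i)}) := by
    unfold UboundR
    apply le_antisymm
    · apply sInf_le_sInf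
      rintro x ⟨r, ⟨a, ha, hr⟩, rfl⟩
      have hr0 : 0 ≤ r := hr ▸ rnormInf_nonneg hp _
      exact ⟨r, ⟨hr0, (hcond r hr0).mpr ⟨a, ha, hr.ge⟩⟩, rfl⟩
    · apply le_sInf
      rintro x ⟨u, ⟨hu0, hnemp⟩, rfl⟩
      obtain ⟨a, ha, hle⟩ := (hcond u hu0).mp hnemp
      exact le_trans (sInf_le ⟨_, ⟨a, ha, rfl⟩, rfl⟩) (ENNReal.ofReal_le_ofReal hle)
  refine ⟨hQ, hXd, hU, ?_, ?_⟩
  · intro hg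
    apply le_antisymm _ (zero_le)
    have h0A : (XuSetR Cs L Ψ 0 ∩ QSetR Cs Ψ).Nonempty := by
      rw [hint 0, mem_Xu_iff Ψ L hLcv (gradL 0) (hLd 0) 0]
      intro χ hχ
      have hin : ⟪gradL 0, χ⟫ = ∑ i, gradL 0 i * χ i := by
        rw [PiLp.inner_apply]; exact Finset.sum_congr rfl fun i _ => by simp [mul_comm]
      rw [hin, zero_mul, add_zero]
      exact Finset.sum_nonneg fun i _ => mul_nonneg (hg i) (hχ i)
    refine le_trans (sInf_le ⟨0, ⟨le_refl 0, h0A⟩, rfl⟩) ?_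
    simp
  · intro hΨ1
    subst hΨ1
    rw [hU]
    obtain ⟨i0, -, hi0⟩ := Finset.exists_min_image Finset.univ (fun i => gradL 0 i)
      ⟨⟨0, hp⟩, Finset.mem_univ _⟩
    have hInf : (⨅ i, gradL 0 i) = gradL 0 i0 :=
      le_antisymm (ciInf_le (Set.Finite.bddBelow (Set.finite_range _)) i0)
        (le_ciInf fun i => hi0 i (Finset.mem_univ i))
    rw [hInf]
    set a : EuclideanSpace ℝ (Fin p) :=
      (EuclideanSpace.equiv (Fin p) ℝ).symm (fun i => -(max (gradL 0 i) 0)) with hadef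
    have haneg : ∀ i, a i ≤ 0 := by
      intro i
      show -(max (gradL 0 i) 0) ≤ 0
      simp [le_max_right]
    have hfun : (fun i => gradL 0 i + a i) = fun i => min (gradL 0 i) 0 := by
      funext i
      show gradL 0 i + -(max (gradL 0 i) 0) = min (gradL 0 i) 0
      rcases le_total (gradL 0 i) 0 with h | h
      · rw [max_eq_right h, min_eq_left h]; ring
      · rw [max_eq_left h, min_eq_right h]; ring
    have hmulv : (1 : Matrix (Fin p) (Fin p) ℝ)⁻¹.mulVec (fun i => gradL 0 i + a i) =
        fun i => min (gradL 0 i) 0 := by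
      rw [inv_one, Matrix.one_mulVec, hfun]
    have hval : rnormInf (fun i => min (gradL 0 i) 0) = -min 0 (gradL 0 i0) := by
      apply le_antisymm
      · refine ciSup_le fun i => ?_
        rw [abs_of_nonpos (min_le_right _ _)]
        have hmm : min 0 (gradL 0 i0) ≤ min (gradL 0 i) 0 := by
          rw [min_comm (gradL 0 i) 0]
          exact min_le_min le_rfl (hi0 i (Finset.mem_univ i))
        linarith
      · have hrr : -min 0 (gradL 0 i0) = |min (gradL 0 i0) 0| := by
          rw [abs_of_nonpos (min_le_right _ _), min_comm]
        rw [hrr]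
        exact abs_le_rnormInf (fun i => min (gradL 0 i) 0) i0
    apply le_antisymm
    · exact sInf_le ⟨-min 0 (gradL 0 i0), ⟨a, haneg, by rw [hmulv, hval]⟩, rfl⟩
    · apply le_sInf
      rintro x ⟨r, ⟨b, hb, hr⟩, rfl⟩
      apply ENNReal.ofReal_le_ofReal
      rw [hr, inv_one, Matrix.one_mulVec]
      rcases le_or_gt 0 (gradL 0 i0) with h | h
      · have : min 0 (gradL 0 i0) = 0 := min_eq_left h
        rw [this, neg_zero]
        exact rnormInf_nonneg hp _
      · have hm : min 0 (gradL 0 i0) = gradL 0 i0 := min_eq_right h.le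
        rw [hm]
        have h1 : -(gradL 0 i0) ≤ |gradL 0 i0 + b i0| := by
          have : gradL 0 i0 + b i0 ≤ gradL 0 i0 := by linarith [hb i0]
          rw [abs_of_nonpos (by linarith : gradL 0 i0 + b i0 ≤ 0)]
          linarith
        exact h1.trans (abs_le_rnormInf (fun i => gradL 0 i + b i) i0)
end
end

section
/- (Factorization identities) Let Ψ be a complex p × p' matrix factored as Ψ = F Z, where F is a real p × d matrix of rank d and Z is a complex d × p' matrix whose real d × 2p' matrix [Re Z Im Z] has rank d. Then: (i) the real d × d matrix Re(Z Z^H) is invertible, so Z^‡ = Z^H (Re(Z Z^H))⁻¹ is well defined; (ii) Re(Ψ Z^‡) = F; and (iii) the column space of F equals Re(R(Ψ)) = {Re(Ψ w) : w ∈ ℂ^{p'}}. -/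
open Matrix

noncomputable section

lemma re_map_real_mul {m n k : Type*} [Fintype n] (F : Matrix m n ℝ) (C : Matrix n k ℂ) :
    ((F.map Complex.ofReal) * C).map Complex.re = F * C.map Complex.re := by
  ext i j
  simp [Matrix.mul_apply, Complex.re_sum, Complex.re_ofReal_mul]

lemma mul_map_real_re {m n k : Type*} [Fintype n] (C : Matrix m n ℂ) (G : Matrix n k ℝ) :
    (C * (G.map Complex.ofReal)).map Complex.re = C.map Complex.re * G := by
  ext i j
  simp [Matrix.mul_apply, Complex.re_sum, Complex.mul_re]

theorem statement_18 {p p' d : ℕ} (hp : 0 < p) (hp' : 0 < p') (hd : 0 < d)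
    (Ψ : Matrix (Fin p) (Fin p') ℂ)
    (F : Matrix (Fin p) (Fin d) ℝ) (Z : Matrix (Fin d) (Fin p') ℂ)
    (hfac : Ψ = F.map Complex.ofReal * Z)
    (hF : F.rank = d)
    (hZ : (Matrix.fromCols (Z.map Complex.re) (Z.map Complex.im)).rank = d) :
    IsUnit ((Z * Zᴴ).map Complex.re).det ∧
    (Ψ * (Zᴴ * (((Z * Zᴴ).map Complex.re)⁻¹.map Complex.ofReal))).map Complex.re = F ∧
    {v : Fin p → ℝ | ∃ c : Fin d → ℝ, F.mulVec c = v} =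
      {v : Fin p → ℝ | ∃ w : Fin p' → ℂ, (fun i => (Ψ.mulVec w i).re) = v} := by
  set M := (Z * Zᴴ).map Complex.re with hM
  -- M is the Gram matrix of the full-rank real matrix [Re Z, Im Z]
  have hMgram : M = (Matrix.fromCols (Z.map Complex.re) (Z.map Complex.im)) *
      (Matrix.fromCols (Z.map Complex.re) (Z.map Complex.im))ᵀ := by
    rw [Matrix.transpose_fromCols, Matrix.fromCols_mul_fromRows]
    ext i j
    simp [hM, Matrix.mul_apply, Complex.re_sum, Complex.mul_re, Finset.sum_add_distrib]
  have hMrank : M.rank = d := by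
    rw [hMgram, Matrix.rank_self_mul_transpose, hZ]
  -- rank d square matrix has unit determinant
  have hrange : LinearMap.range M.mulVecLin = ⊤ := by
    apply Submodule.eq_top_of_finrank_eq
    rw [show Module.finrank ℝ ↥(LinearMap.range M.mulVecLin) = M.rank from rfl, hMrank,
      Module.finrank_pi]
    simp
  have hMunit : IsUnit M.det := by
    rw [← Matrix.isUnit_iff_isUnit_det, ← Matrix.mulVec_surjective_iff_isUnit]
    intro y
    obtain ⟨x, hx⟩ := LinearMap.range_eq_top.mp hrange y
    exact ⟨x, hx⟩
  -- part (ii)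
  have hii : (Ψ * (Zᴴ * (M⁻¹.map Complex.ofReal))).map Complex.re = F := by
    rw [hfac, Matrix.mul_assoc, ← Matrix.mul_assoc Z, ← Matrix.mul_assoc,
      Matrix.mul_assoc (F.map Complex.ofReal), re_map_real_mul, mul_map_real_re, ← hM,
      Matrix.mul_nonsing_inv M hMunit, Matrix.mul_one]
  refine ⟨hMunit, hii, ?_⟩
  ext v
  simp only [Set.mem_setOf_eq]
  constructor
  · rintro ⟨c, rfl⟩
    refine ⟨(Zᴴ * (M⁻¹.map Complex.ofReal)).mulVec (fun j => (c j : ℂ)), ?_⟩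
    funext i
    rw [Matrix.mulVec_mulVec]
    have : ((Ψ * (Zᴴ * M⁻¹.map Complex.ofReal)).mulVec (fun j => (c j : ℂ)) i).re =
        ((Ψ * (Zᴴ * M⁻¹.map Complex.ofReal)).map Complex.re).mulVec c i := by
      simp [Matrix.mulVec, dotProduct, Complex.re_sum, Complex.mul_re]
    rw [this, hii]
  · rintro ⟨w, rfl⟩
    refine ⟨fun k => (Z.mulVec w k).re, ?_⟩
    funext i
    rw [hfac, ← Matrix.mulVec_mulVec]
    simp [Matrix.mulVec, dotProduct, Complex.re_sum, Complex.re_ofReal_mul]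
end
end
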